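/- Let A be SPD and E symmetric with ‖A^{-1/2} E A^{-1/2}‖₂ ≤ μ < 1. Then A + E is SPD and all eigenvalues of (A+E)^{-1/2} A (A+E)^{-1/2} lie in the interval [1/(1+μ), 1/(1−μ)]. -/

import Mathlib

open Matrix

/-- The spectral norm (ℓ²-operator norm) of a real square matrix. -/
noncomputable def matrixSpectralNorm (n : ℕ) (M : Matrix (Fin n) (Fin n) ℝ) : ℝ :=
  ‖LinearMap.toContinuousLinearMap (Matrix.toEuclideanLin M)‖

lemma dotProduct_self_nonneg' {n : ℕ} (x : Fin n → ℝ) : 0 ≤ x ⬝ᵥ x :=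
  Finset.sum_nonneg fun i _ => mul_self_nonneg _

/-- Quadratic form bound by the spectral norm. -/
lemma quad_bound (n : ℕ) (M : Matrix (Fin n) (Fin n) ℝ) (x : Fin n → ℝ) :
    |x ⬝ᵥ M *ᵥ x| ≤ matrixSpectralNorm n M * (x ⬝ᵥ x) := by
  set T := LinearMap.toContinuousLinearMap (Matrix.toEuclideanLin M) with hT
  set x' : EuclideanSpace ℝ (Fin n) := (WithLp.equiv 2 (Fin n → ℝ)).symm x with hx'
  have h1 : inner ℝ x' (T x') = x ⬝ᵥ M *ᵥ x := by
    rw [EuclideanSpace.inner_eq_star_dotProduct]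
    simp [hT, Matrix.toEuclideanLin_apply, hx', star_trivial, dotProduct_comm]
  have h2 : x ⬝ᵥ x = ‖x'‖ ^ 2 := by
    rw [← real_inner_self_eq_norm_sq, EuclideanSpace.inner_eq_star_dotProduct]
    simp [hx', star_trivial]
  calc |x ⬝ᵥ M *ᵥ x| = |inner ℝ x' (T x')| := by rw [h1]
    _ ≤ ‖x'‖ * ‖T x'‖ := abs_real_inner_le_norm x' (T x')
    _ ≤ ‖x'‖ * (‖T‖ * ‖x'‖) := by
        gcongr; exact T.le_opNorm x'
    _ = matrixSpectralNorm n M * (x ⬝ᵥ x) := by rw [h2, matrixSpectralNorm]; ring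

/-- Sandwiching a quadratic form with a symmetric matrix. -/
lemma sandwich {n : ℕ} (B M : Matrix (Fin n) (Fin n) ℝ) (hB : Bᵀ = B) (w : Fin n → ℝ) :
    (B *ᵥ w) ⬝ᵥ M *ᵥ (B *ᵥ w) = w ⬝ᵥ (B * M * B) *ᵥ w := by
  rw [Matrix.mulVec_mulVec, ← Matrix.vecMul_transpose, hB, ← Matrix.dotProduct_mulVec,
    Matrix.mulVec_mulVec, ← mul_assoc]

/-- Let `A` be SPD and `E` symmetric with `‖A^{-1/2} E A^{-1/2}‖₂ ≤ μ < 1`,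
where `R = A^{-1/2}` is the SPD square root of `A⁻¹`.  Then `A + E` is SPD and
all eigenvalues of `(A+E)^{-1/2} A (A+E)^{-1/2}` (where `S = (A+E)^{-1/2}` is the
SPD square root of `(A+E)⁻¹`) lie in the interval `[1/(1+μ), 1/(1−μ)]`. -/
theorem perturbed_preconditioner_eigenvalue_bounds (n : ℕ) (μ : ℝ)
    (A E R : Matrix (Fin n) (Fin n) ℝ)
    (hA : A.PosDef) (hE : E.IsSymm)
    (hR : R.PosDef) (hRR : R * R = A⁻¹)
    (hμ0 : 0 ≤ μ) (hμ1 : μ < 1)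
    (hnorm : matrixSpectralNorm n (R * E * R) ≤ μ) :
    (A + E).PosDef ∧
    ∀ S : Matrix (Fin n) (Fin n) ℝ, S.PosDef → S * S = (A + E)⁻¹ →
      ∀ (h : (S * A * S).IsHermitian) (i : Fin n),
        h.eigenvalues i ∈ Set.Icc (1 / (1 + μ)) (1 / (1 - μ)) := by
  have hAd : IsUnit A.det := hA.det_pos.ne'.isUnit
  have hRd : IsUnit R.det := hR.det_pos.ne'.isUnit
  have hRT : Rᵀ = R := hR.1
  have hAinv : A = R⁻¹ * R⁻¹ := by
    rw [← Matrix.mul_inv_rev, hRR, Matrix.nonsing_inv_nonsing_inv _ hAd]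
  have hRAR : R * A * R = 1 := by
    rw [hAinv, ← mul_assoc, mul_assoc (R * R⁻¹), Matrix.mul_nonsing_inv _ hRd,
      Matrix.nonsing_inv_mul _ hRd, mul_one]
  -- the key quadratic form bound
  have key : ∀ z : Fin n → ℝ, |z ⬝ᵥ E *ᵥ z| ≤ μ * (z ⬝ᵥ A *ᵥ z) := by
    intro z
    set w := R⁻¹ *ᵥ z with hw
    have hz : z = R *ᵥ w := by
      rw [hw, Matrix.mulVec_mulVec, Matrix.mul_nonsing_inv _ hRd, Matrix.one_mulVec]
    rw [hz, sandwich R E hRT w, sandwich R A hRT w, hRAR, Matrix.one_mulVec]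
    calc |w ⬝ᵥ (R * E * R) *ᵥ w| ≤ matrixSpectralNorm n (R * E * R) * (w ⬝ᵥ w) :=
          quad_bound n (R * E * R) w
      _ ≤ μ * (w ⬝ᵥ w) := by
          apply mul_le_mul_of_nonneg_right hnorm (dotProduct_self_nonneg' w)
  -- positivity of A + E
  have hpos : (A + E).PosDef := by
    refine Matrix.PosDef.of_dotProduct_mulVec_pos (Matrix.IsHermitian.add hA.1 hE) (fun x hx => ?_)
    have ha : 0 < x ⬝ᵥ A *ᵥ x := by
      have := hA.dotProduct_mulVec_pos hx; rwa [star_trivial] at this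
    have he := key x
    rw [star_trivial, Matrix.add_mulVec, dotProduct_add]
    have := abs_le.mp he
    nlinarith [this.1, this.2]
  refine ⟨hpos, ?_⟩
  intro S hS hSS h i
  have hSd : IsUnit S.det := hS.det_pos.ne'.isUnit
  have hAEd : IsUnit (A + E).det := hpos.det_pos.ne'.isUnit
  have hST : Sᵀ = S := hS.1
  have hSAE : S * (A + E) * S = 1 := by
    have h1 : S * (S * (A + E)) = 1 := by
      rw [← mul_assoc, hSS, Matrix.nonsing_inv_mul _ hAEd]
    have h2 : S⁻¹ = S * (A + E) := Matrix.inv_eq_right_inv h1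
    rw [← h2, Matrix.nonsing_inv_mul _ hSd]
  set v : Fin n → ℝ := (WithLp.equiv 2 (Fin n → ℝ)) (h.eigenvectorBasis i) with hv
  have hev : (S * A * S) *ᵥ v = h.eigenvalues i • v := h.mulVec_eigenvectorBasis i
  have hvv : v ⬝ᵥ v = 1 := by
    have h1 : (inner ℝ (h.eigenvectorBasis i) (h.eigenvectorBasis i) : ℝ) = 1 := by
      rw [real_inner_self_eq_norm_sq, h.eigenvectorBasis.orthonormal.1 i]; norm_num
    rw [EuclideanSpace.inner_eq_star_dotProduct] at h1
    simpa [hv, star_trivial] using h1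
  have hlam : v ⬝ᵥ (S * A * S) *ᵥ v = h.eigenvalues i := by
    rw [hev, dotProduct_smul, hvv, smul_eq_mul, mul_one]
  set z := S *ᵥ v with hz
  have ha : z ⬝ᵥ A *ᵥ z = h.eigenvalues i := by
    rw [hz, sandwich S A hST v, hlam]
  have hone : z ⬝ᵥ (A + E) *ᵥ z = 1 := by
    rw [hz, sandwich S (A + E) hST v, hSAE, Matrix.one_mulVec, hvv]
  have he := key z
  have hsplit : z ⬝ᵥ (A + E) *ᵥ z = z ⬝ᵥ A *ᵥ z + z ⬝ᵥ E *ᵥ z := by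
    rw [Matrix.add_mulVec, dotProduct_add]
  have hz0 : z ≠ 0 := by
    intro h0
    rw [h0] at hone
    simp at hone
  have hapos : 0 < z ⬝ᵥ A *ᵥ z := by
    have := hA.dotProduct_mulVec_pos hz0; rwa [star_trivial] at this
  have habs := abs_le.mp he
  constructor
  · rw [div_le_iff₀ (by linarith : (0:ℝ) < 1 + μ)]
    nlinarith [habs.1, habs.2]
  · rw [le_div_iff₀ (by linarith : (0:ℝ) < 1 - μ)]
    nlinarith [habs.1, habs.2]
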